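/- If every Dunford-Pettis completely continuous operator from a Banach space X into ℓ∞ is weakly compact, then X has the L-Dunford-Pettis property. -/

import Mathlib

open Filter Topology Metric

noncomputable section

instance : Fact ((1:ENNReal) ≤ ⊤) := ⟨le_top⟩

/-- A sequence is weakly null if every continuous linear functional sends it to a null
sequence. -/
def WeaklyNull {X : Type*} [NormedAddCommGroup X] [NormedSpace ℝ X] (x : ℕ → X) : Prop :=
  ∀ f : X →L[ℝ] ℝ, Tendsto (fun n => f (x n)) atTop (𝓝 0)

/-- A sequence of functionals is weak*-null if it tends to zero pointwise. -/
def WeakStarNull {X : Type*} [NormedAddCommGroup X] [NormedSpace ℝ X]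
    (f : ℕ → X →L[ℝ] ℝ) : Prop :=
  ∀ x : X, Tendsto (fun n => f n x) atTop (𝓝 0)

/-- A norm bounded set is a Dunford-Pettis set if every weakly null sequence of functionals
converges to zero uniformly on it. -/
def IsDPSet {X : Type*} [NormedAddCommGroup X] [NormedSpace ℝ X] (A : Set X) : Prop :=
  Bornology.IsBounded A ∧
  ∀ f : ℕ → X →L[ℝ] ℝ, WeaklyNull f →
    Tendsto (fun n => ⨆ x : A, |f n (x : X)|) atTop (𝓝 0)

/-- A norm bounded subset of the dual is an L-set if every weakly null sequence in `X`
converges to zero uniformly on it. -/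
def IsLSet {X : Type*} [NormedAddCommGroup X] [NormedSpace ℝ X]
    (A : Set (X →L[ℝ] ℝ)) : Prop :=
  Bornology.IsBounded A ∧
  ∀ x : ℕ → X, WeaklyNull x →
    Tendsto (fun n => ⨆ f : A, |(f : X →L[ℝ] ℝ) (x n)|) atTop (𝓝 0)

/-- A norm bounded subset of the dual is an L-Dunford-Pettis set if every weakly null
sequence in `X` which is a Dunford-Pettis set converges to zero uniformly on it. -/
def IsLDPSet {X : Type*} [NormedAddCommGroup X] [NormedSpace ℝ X]
    (A : Set (X →L[ℝ] ℝ)) : Prop :=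
  Bornology.IsBounded A ∧
  ∀ x : ℕ → X, WeaklyNull x → IsDPSet (Set.range x) →
    Tendsto (fun n => ⨆ f : A, |(f : X →L[ℝ] ℝ) (x n)|) atTop (𝓝 0)

/-- A set is relatively weakly compact if its closure in the weak topology is compact. -/
def RelWeaklyCompact {X : Type*} [NormedAddCommGroup X] [NormedSpace ℝ X]
    (A : Set X) : Prop :=
  IsCompact (closure ((toWeakSpace ℝ X) '' A))

/-- The relatively compact Dunford-Pettis property: every Dunford-Pettis set is
relatively norm compact. -/
def HasDPrcP (X : Type*) [NormedAddCommGroup X] [NormedSpace ℝ X] : Prop :=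
  ∀ A : Set X, IsDPSet A → IsCompact (closure A)

/-- An operator is Dunford-Pettis completely continuous if it maps weakly null sequences
that are Dunford-Pettis sets to norm null sequences. -/
def IsDPcc {X Y : Type*} [NormedAddCommGroup X] [NormedSpace ℝ X]
    [NormedAddCommGroup Y] [NormedSpace ℝ Y] (T : X →L[ℝ] Y) : Prop :=
  ∀ x : ℕ → X, WeaklyNull x → IsDPSet (Set.range x) →
    Tendsto (fun n => ‖T (x n)‖) atTop (𝓝 0)

/-- An operator is weakly compact if the image of the closed unit ball is relatively
weakly compact. -/
def IsWeaklyCompactOp {X Y : Type*} [NormedAddCommGroup X] [NormedSpace ℝ X]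
    [NormedAddCommGroup Y] [NormedSpace ℝ Y] (T : X →L[ℝ] Y) : Prop :=
  RelWeaklyCompact (T '' closedBall 0 1)

/-- The L-Dunford-Pettis property: every L-Dunford-Pettis set in the dual is relatively
weakly compact. -/
def HasLDPProperty (X : Type*) [NormedAddCommGroup X] [NormedSpace ℝ X] : Prop :=
  ∀ A : Set (X →L[ℝ] ℝ), IsLDPSet A → RelWeaklyCompact A

/-- The Dunford-Pettis property: every relatively weakly compact set is a
Dunford-Pettis set. -/
def HasDPProperty (X : Type*) [NormedAddCommGroup X] [NormedSpace ℝ X] : Prop :=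
  ∀ A : Set X, RelWeaklyCompact A → IsDPSet A

/-- Grothendieck space: every weak*-null sequence in the dual is weakly null. -/
def IsGrothendieck (X : Type*) [NormedAddCommGroup X] [NormedSpace ℝ X] : Prop :=
  ∀ f : ℕ → X →L[ℝ] ℝ, WeakStarNull f → WeaklyNull f

/-- The space `ℓ∞` of bounded real sequences. -/
abbrev ellInfty : Type := lp (fun _ : ℕ => ℝ) ⊤

section AuxiliaryLemmas
open Set


lemma exists_ultra_lim {α : Type*} (V : Ultrafilter α) (u : α → ℝ) (M : ℝ)
    (h : ∀ᶠ a in V, |u a| ≤ M) : ∃ L, Tendsto u V (𝓝 L) ∧ |L| ≤ M := by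
  have hmem : Set.Icc (-M) M ∈ V.map u := by
    rw [Ultrafilter.mem_map]
    exact h.mono fun a ha => abs_le.mp ha
  obtain ⟨L, hL, hle⟩ := isCompact_Icc.ultrafilter_le_nhds' (V.map u) hmem
  refine ⟨L, ?_, abs_le.mpr hL⟩
  rwa [Ultrafilter.coe_map] at hle

lemma isCompact_closure_of_forall_ultrafilter {Y : Type*} [TopologicalSpace Y] [RegularSpace Y]
    [Nonempty Y] {S : Set Y} (h : ∀ U : Ultrafilter Y, S ∈ U → ∃ y, (U : Filter Y) ≤ 𝓝 y) :
    IsCompact (closure S) := by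
  rw [isCompact_iff_ultrafilter_le_nhds']
  intro U hU
  set 𝒢 : Set (Set Y) := {t | ∃ O : Set Y, IsOpen O ∧ closure S ∩ O ∈ U ∧ t = O ∩ S} with h𝒢
  have hne : (Filter.generate 𝒢).NeBot := by
    rw [Filter.generate_neBot_iff]
    intro t hts htf
    rcases t.eq_empty_or_nonempty with rfl | hne
    · simp
    haveI : Nonempty t := hne.to_subtype
    haveI : Finite t := htf.to_subtype
    choose O hO1 hO2 hO3 using fun x : t => hts x.2
    have hOmem : closure S ∩ ⋂ x : t, O x ∈ U := by
      rw [Set.inter_iInter]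
      exact Filter.iInter_mem.2 fun x => hO2 x
    obtain ⟨y, hyc, hyO⟩ := U.nonempty_of_mem hOmem
    have hopen : IsOpen (⋂ x : t, O x) := isOpen_iInter_of_finite hO1
    obtain ⟨s₀, hs₀O, hs₀S⟩ := mem_closure_iff.mp hyc _ hopen hyO
    refine ⟨s₀, ?_⟩
    rw [Set.mem_sInter]
    intro t' ht'
    rw [show t' = O ⟨t', ht'⟩ ∩ S from hO3 ⟨t', ht'⟩]
    exact ⟨Set.mem_iInter.mp hs₀O ⟨t', ht'⟩, hs₀S⟩
  set G' : Ultrafilter Y := Ultrafilter.of (Filter.generate 𝒢) with hG'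
  have hSmem : S ∈ G' := by
    refine Ultrafilter.of_le _ (Filter.mem_generate_of_mem ?_)
    exact ⟨Set.univ, isOpen_univ, by simpa using hU, (Set.univ_inter S).symm⟩
  obtain ⟨y, hy⟩ := h G' hSmem
  have hyc : y ∈ closure S := by
    rw [mem_closure_iff_clusterPt]
    exact Filter.neBot_of_le (le_inf hy (le_principal_iff.mpr hSmem))
  refine ⟨y, hyc, ?_⟩
  rw [← Ultrafilter.clusterPt_iff, clusterPt_iff_nonempty]
  intro W hW N hN
  obtain ⟨W₁, hW₁y, hW₁c, hW₁W⟩ := exists_mem_nhds_isClosed_subset hW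
  by_contra hemp
  have hsub : closure S ∩ N ⊆ W₁ᶜ := by
    intro x hx hxW₁
    exact hemp ⟨x, hW₁W hxW₁, hx.2⟩
  have hO : closure S ∩ W₁ᶜ ∈ U := by
    refine Filter.mem_of_superset (Filter.inter_mem hU hN) ?_
    exact fun x hx => ⟨hx.1, hsub hx⟩
  have ht : W₁ᶜ ∩ S ∈ G' :=
    Ultrafilter.of_le _ (Filter.mem_generate_of_mem ⟨W₁ᶜ, hW₁c.isOpen_compl, hO, rfl⟩)
  have hW₁G : W₁ ∈ G' := hy hW₁y
  obtain ⟨x, hx1, hx2, _⟩ := G'.nonempty_of_mem (Filter.inter_mem hW₁G ht)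
  exact hx2 hx1

lemma tendsto_of_eventually_abs_le {u : ℕ → ℝ} {L : ℝ}
    (h : ∀ᶠ m in atTop, |u m - L| ≤ 1 / ((m : ℝ) + 1)) : Tendsto u atTop (𝓝 L) := by
  rw [tendsto_iff_dist_tendsto_zero]
  refine squeeze_zero' (Eventually.of_forall fun _ => dist_nonneg) ?_
    tendsto_one_div_add_atTop_nhds_zero_nat
  filter_upwards [h] with m hm
  rwa [Real.dist_eq]

lemma exists_interleaved {α β : Type*} [Nonempty α] [Nonempty β]
    (Qg : ℕ → (ℕ → β) → α → Prop) (Qx : ℕ → (ℕ → α) → β → Prop)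
    (hQg : ∀ n (xs xs' : ℕ → β), (∀ i, i < n → xs i = xs' i) → ∀ a, Qg n xs a → Qg n xs' a)
    (hQx : ∀ n (gs gs' : ℕ → α), (∀ i, i ≤ n → gs i = gs' i) → ∀ b, Qx n gs b → Qx n gs' b)
    (hg : ∀ n xs, ∃ a, Qg n xs a) (hx : ∀ n gs, ∃ b, Qx n gs b) :
    ∃ F : ℕ → α × β, ∀ n, Qg n (fun i => (F i).2) (F n).1 ∧ Qx n (fun i => (F i).1) (F n).2 := by
  classical
  let stepa : ℕ → (ℕ → α × β) → α := fun n h => (hg n fun i => (h i).2).choose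
  let stepb : ℕ → (ℕ → α × β) → β :=
    fun n h => (hx n (Function.update (fun i => (h i).1) n (stepa n h))).choose
  let G : ℕ → ℕ → α × β := fun n =>
    Nat.rec (fun _ => (Classical.arbitrary α, Classical.arbitrary β))
      (fun m Gm => Function.update Gm m (stepa m Gm, stepb m Gm)) n
  let F : ℕ → α × β := fun n => (stepa n (G n), stepb n (G n))
  have hG : ∀ n i, i < n → G n i = F i := by
    intro n
    induction n with
    | zero => intro i hi; omega
    | succ m ih =>
      intro i hi
      show Function.update (G m) m (stepa m (G m), stepb m (G m)) i = F i
      rcases Nat.lt_succ_iff_lt_or_eq.mp hi with hi' | rfl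
      · rw [Function.update_of_ne (by omega)]
        exact ih i hi'
      · rw [Function.update_self]
  refine ⟨F, fun n => ⟨?_, ?_⟩⟩
  · have hspec := (hg n fun i => ((G n) i).2).choose_spec
    exact hQg n _ _ (fun i hi => by rw [hG n i hi]) _ hspec
  · have hspec := (hx n (Function.update (fun i => ((G n) i).1) n (stepa n (G n)))).choose_spec
    refine hQx n _ _ (fun i hi => ?_) _ hspec
    rcases Nat.lt_or_ge i n with hi' | hi'
    · rw [Function.update_of_ne (by omega)]
      show ((G n) i).1 = (F i).1
      rw [hG n i hi']
    · have : i = n := le_antisymm hi hi'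
      subst this
      rw [Function.update_self]


lemma helly_approx {X : Type*} [NormedAddCommGroup X] [NormedSpace ℝ X]
    (Φ : (X →L[ℝ] ℝ) →L[ℝ] ℝ) {R : ℝ} (hR : ‖Φ‖ < R) {n : ℕ} (φs : Fin n → X →L[ℝ] ℝ)
    {δ : ℝ} (hδ : 0 < δ) : ∃ x : X, ‖x‖ ≤ R ∧ ∀ i, |φs i x - Φ (φs i)| < δ := by
  classical
  have hR0 : (0 : ℝ) < R := lt_of_le_of_lt (norm_nonneg Φ) hR
  set ev : X →ₗ[ℝ] (Fin n → ℝ) := LinearMap.pi (fun i => (φs i).toLinearMap) with hev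
  set Sim : Set (Fin n → ℝ) := ev '' (closedBall (0 : X) R) with hSim
  have hconv : Convex ℝ (closure Sim) := ((convex_closedBall _ _).linear_image ev).closure
  have hp : (fun i => Φ (φs i)) ∈ closure Sim := by
    by_contra hnot
    obtain ⟨f, u, hfu, hup⟩ := geometric_hahn_banach_closed_point hconv isClosed_closure hnot
    have h0mem : (0 : Fin n → ℝ) ∈ closure Sim := by
      refine subset_closure ⟨0, mem_closedBall_self hR0.le, ?_⟩
      simp [hev]
    have hu0 : 0 < u := by simpa using hfu 0 h0mem
    set ζ : X →L[ℝ] ℝ := ∑ i, f (Pi.single i 1) • φs i with hζ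
    have hfev : ∀ x : X, f (ev x) = ζ x := by
      intro x
      have hx : ev x = ∑ i, (ev x i) • (Pi.single i 1 : Fin n → ℝ) := by
        refine funext fun j => ?_
        rw [Finset.sum_apply]
        simp [Pi.single_apply]
      rw [hx]
      simp only [map_sum, map_smul, hζ, ContinuousLinearMap.coe_sum',
        Finset.sum_apply, ContinuousLinearMap.coe_smul', Pi.smul_apply, smul_eq_mul]
      refine Finset.sum_congr rfl fun i _ => ?_
      have : ev x i = φs i x := rfl
      rw [this]
      ring
    have habs : ∀ x : X, ‖x‖ ≤ R → |ζ x| ≤ u := by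
      intro x hx
      have h1 : ζ x < u := by
        rw [← hfev x]
        exact hfu (ev x) (subset_closure ⟨x, by simpa [mem_closedBall_zero_iff] using hx, rfl⟩)
      have h2 : -ζ x < u := by
        have := hfu (ev (-x)) (subset_closure ⟨-x, by simpa [mem_closedBall_zero_iff] using hx, rfl⟩)
        rw [hfev (-x)] at this
        simpa using this
      rw [abs_le]
      constructor <;> linarith
    have hζnorm : ‖ζ‖ ≤ u / R := by
      refine ζ.opNorm_le_bound (div_nonneg hu0.le hR0.le) fun x => ?_
      rcases eq_or_ne x 0 with rfl | hx0
      · simp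
      · have hxn : 0 < ‖x‖ := norm_pos_iff.mpr hx0
        have hy : ‖(R / ‖x‖) • x‖ ≤ R := by
          rw [norm_smul, Real.norm_eq_abs, abs_of_pos (div_pos hR0 hxn)]
          rw [div_mul_cancel₀ _ hxn.ne']
        have := habs _ hy
        rw [map_smul, smul_eq_mul, abs_mul, abs_of_pos (div_pos hR0 hxn)] at this
        calc |ζ x| = (‖x‖ / R) * (R / ‖x‖ * |ζ x|) := by field_simp
          _ ≤ (‖x‖ / R) * u := by
              exact mul_le_mul_of_nonneg_left this (div_nonneg hxn.le hR0.le)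
          _ = u / R * ‖x‖ := by ring
    have hfp : f (fun i => Φ (φs i)) = Φ ζ := by
      have hx : (fun i => Φ (φs i)) = ∑ i, (Φ (φs i)) • (Pi.single i 1 : Fin n → ℝ) := by
        refine funext fun j => ?_
        rw [Finset.sum_apply]
        simp [Pi.single_apply]
      rw [hx, map_sum, hζ, map_sum]
      simp only [map_smul, smul_eq_mul]
      exact Finset.sum_congr rfl fun i _ => by ring
    have hΦζ : Φ ζ ≤ ‖Φ‖ * (u / R) := by
      calc Φ ζ ≤ |Φ ζ| := le_abs_self _
        _ ≤ ‖Φ‖ * ‖ζ‖ := by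
            have := Φ.le_opNorm ζ
            rwa [Real.norm_eq_abs] at this
        _ ≤ ‖Φ‖ * (u / R) := mul_le_mul_of_nonneg_left hζnorm (norm_nonneg Φ)
    have hlt : ‖Φ‖ * (u / R) < u := by
      have := mul_lt_mul_of_pos_right hR (div_pos hu0 hR0)
      calc ‖Φ‖ * (u / R) < R * (u / R) := this
        _ = u := by field_simp
    rw [hfp] at hup
    linarith
  rw [Metric.mem_closure_iff] at hp
  obtain ⟨b, hb, hd⟩ := hp δ hδ
  obtain ⟨x, hx, rfl⟩ := hb
  refine ⟨x, by simpa [mem_closedBall_zero_iff] using hx, fun i => ?_⟩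
  have hle := dist_le_pi_dist (fun i => Φ (φs i)) (ev x) i
  have : dist (Φ (φs i)) (ev x i) < δ := lt_of_le_of_lt hle hd
  rw [Real.dist_eq] at this
  have hevi : ev x i = φs i x := rfl
  rw [hevi] at this
  rwa [abs_sub_comm] at this

end AuxiliaryLemmas

set_option maxHeartbeats 1600000 in
set_option synthInstance.maxHeartbeats 200000 in
theorem stmt10 {X : Type*} [NormedAddCommGroup X] [NormedSpace ℝ X] [CompleteSpace X]
    (h : ∀ T : X →L[ℝ] ellInfty, IsDPcc T → IsWeaklyCompactOp T) :
    HasLDPProperty X := by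
  rintro A ⟨hbdd, hA⟩
  obtain ⟨C₀, hC₀⟩ := hbdd.subset_closedBall 0
  set C := max C₀ 0 with hC
  have hCA : ∀ φ ∈ A, ‖φ‖ ≤ C := fun φ hφ =>
    le_max_of_le_left (mem_closedBall_zero_iff.mp (hC₀ hφ))
  have hC0 : (0:ℝ) ≤ C := le_max_right _ _
  show IsCompact (closure ((toWeakSpace ℝ (X →L[ℝ] ℝ)) '' A))
  letI : Nonempty (WeakSpace ℝ (X →L[ℝ] ℝ)) := ⟨0⟩
  apply isCompact_closure_of_forall_ultrafilter
  intro U hU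
  set e := toWeakSpace ℝ (X →L[ℝ] ℝ) with he
  set U' : Ultrafilter (X →L[ℝ] ℝ) := U.map e.symm with hU'def
  have hAU' : A ∈ U' := by
    rw [Ultrafilter.mem_map]
    refine Filter.mem_of_superset hU ?_
    rintro w ⟨φ, hφ, rfl⟩
    simpa using hφ
  -- limit functional g
  have hgx : ∀ x : X, ∃ L, Tendsto (fun φ : X →L[ℝ] ℝ => φ x) U' (𝓝 L) ∧ |L| ≤ C * ‖x‖ := by
    intro x
    apply exists_ultra_lim
    filter_upwards [hAU'] with φ hφ
    calc |φ x| ≤ ‖φ‖ * ‖x‖ := by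
          have := φ.le_opNorm x; rwa [Real.norm_eq_abs] at this
      _ ≤ C * ‖x‖ := mul_le_mul_of_nonneg_right (hCA φ hφ) (norm_nonneg x)
  choose gf hgf hgfle using hgx
  have gadd : ∀ x y, gf (x + y) = gf x + gf y := by
    intro x y
    refine tendsto_nhds_unique (hgf (x + y)) ?_
    have := (hgf x).add (hgf y)
    simpa [map_add] using this
  have gsmul : ∀ (c : ℝ) (x), gf (c • x) = c * gf x := by
    intro c x
    refine tendsto_nhds_unique (hgf (c • x)) ?_
    have := (hgf x).const_mul c
    simpa [map_smul, smul_eq_mul] using this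
  set g : X →L[ℝ] ℝ := LinearMap.mkContinuous
    { toFun := gf, map_add' := gadd, map_smul' := by intro c x; simpa using gsmul c x } C
    (fun x => by simpa [Real.norm_eq_abs] using hgfle x) with hg
  have hgapp : ∀ x, g x = gf x := fun x => rfl
  -- injectivity of the pairing
  have hBinj : Function.Injective ⇑((topDualPairing ℝ (X →L[ℝ] ℝ)).flip) := by
    intro φ φ' hfe
    ext x
    have := congrArg (fun ψ : ((X →L[ℝ] ℝ) →L[ℝ] ℝ) →ₗ[ℝ] ℝ =>
      ψ (NormedSpace.inclusionInDoubleDual ℝ X x)) hfe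
    simpa [NormedSpace.dual_def, topDualPairing] using this
  refine ⟨e g, ?_⟩
  have hmain : ∀ Φ : (X →L[ℝ] ℝ) →L[ℝ] ℝ,
      Tendsto (fun φ : X →L[ℝ] ℝ => Φ φ) ↑U' (𝓝 (Φ g)) := by
    intro Φ
    have hAev : ∀ᶠ φ in ↑U', φ ∈ A := hAU'
    obtain ⟨c, hc, -⟩ := exists_ultra_lim U' (fun φ => Φ φ) (‖Φ‖ * C) (by
      filter_upwards [hAev] with φ hφ
      calc |Φ φ| ≤ ‖Φ‖ * ‖φ‖ := by
            have := Φ.le_opNorm φ; rwa [Real.norm_eq_abs] at this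
        _ ≤ ‖Φ‖ * C := mul_le_mul_of_nonneg_left (hCA φ hφ) (norm_nonneg Φ))
    suffices hcg : Φ g = c by rw [hcg]; exact hc
    set R : ℝ := ‖Φ‖ + 1 with hRdef
    have hΦR : ‖Φ‖ < R := lt_add_one _
    have hR0 : (0:ℝ) < R := lt_of_le_of_lt (norm_nonneg Φ) hΦR
    have hR1 : (1:ℝ) ≤ R := le_add_of_nonneg_left (norm_nonneg Φ)
    have hRinv1 : R⁻¹ ≤ 1 := inv_le_one_of_one_le₀ hR1
    letI : Nonempty (X →L[ℝ] ℝ) := ⟨0⟩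
    letI : Nonempty X := ⟨0⟩
    obtain ⟨F, hF⟩ := exists_interleaved
      (fun n xs φ => φ ∈ A ∧ |Φ φ - c| < 1/((n:ℝ)+1) ∧
        ∀ i, i < n → |φ (xs i) - g (xs i)| < 1/((n:ℝ)+1))
      (fun n gs x => ‖x‖ ≤ R ∧ (∀ i, i ≤ n → |gs i x - Φ (gs i)| < 1/((n:ℝ)+1)) ∧
        |g x - Φ g| < 1/((n:ℝ)+1))
      (by intro n xs xs' hx a ha
          exact ⟨ha.1, ha.2.1, fun i hi => by rw [← hx i hi]; exact ha.2.2 i hi⟩)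
      (by intro n gs gs' hx b hb
          exact ⟨hb.1, fun i hi => by rw [← hx i hi]; exact hb.2.1 i hi, hb.2.2⟩)
      (by intro n xs
          have hd : (0:ℝ) < 1/((n:ℝ)+1) := by positivity
          have h1 : ∀ᶠ φ in ↑U', |Φ φ - c| < 1/((n:ℝ)+1) := by
            filter_upwards [Metric.tendsto_nhds.mp hc _ hd] with φ hφ
            rwa [Real.dist_eq] at hφ
          have h2 : ∀ᶠ (φ : X →L[ℝ] ℝ) in ↑U', ∀ i ∈ Set.Iio n, |φ (xs i) - g (xs i)| < 1/((n:ℝ)+1) := by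
            refine (Filter.eventually_all_finite (Set.finite_Iio n)).mpr fun i _ => ?_
            filter_upwards [Metric.tendsto_nhds.mp (hgf (xs i)) _ hd] with φ hφ
            rw [Real.dist_eq] at hφ
            exact hφ
          obtain ⟨φ, hφA, hφ1, hφ2⟩ := (hAev.and (h1.and h2)).exists
          exact ⟨φ, hφA, hφ1, fun i hi => hφ2 i hi⟩)
      (by intro n gs
          have hd : (0:ℝ) < 1/((n:ℝ)+1) := by positivity
          obtain ⟨x, hxR, hxs⟩ := helly_approx Φ hΦR
            (φs := fun i : Fin (n+2) => if (i:ℕ) ≤ n then gs i else g) hd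
          refine ⟨x, hxR, fun i hi => ?_, ?_⟩
          · simpa [hi] using hxs ⟨i, by omega⟩
          · simpa using hxs ⟨n+1, by omega⟩)
    set gseq : ℕ → X →L[ℝ] ℝ := fun n => (F n).1 with hgseqdef
    set xseq : ℕ → X := fun n => (F n).2 with hxseqdef
    have hmemA : ∀ n, gseq n ∈ A := fun n => (hF n).1.1
    have hPgs : ∀ n, |Φ (gseq n) - c| < 1/((n:ℝ)+1) := fun n => (hF n).1.2.1
    have hgx2 : ∀ n i, i < n → |gseq n (xseq i) - g (xseq i)| < 1/((n:ℝ)+1) :=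
      fun n => (hF n).1.2.2
    have hxRn : ∀ n, ‖xseq n‖ ≤ R := fun n => (hF n).2.1
    have hgsx : ∀ n i, i ≤ n → |gseq i (xseq n) - Φ (gseq i)| < 1/((n:ℝ)+1) :=
      fun n => (hF n).2.2.1
    have hgxg : ∀ n, |g (xseq n) - Φ g| < 1/((n:ℝ)+1) := fun n => (hF n).2.2.2
    -- the operator T
    have hmemlp : ∀ x : X, Memℓp (fun n => gseq n x) ⊤ := by
      intro x
      apply memℓp_infty
      refine ⟨C * ‖x‖, ?_⟩
      rintro - ⟨n, rfl⟩
      calc ‖gseq n x‖ ≤ ‖gseq n‖ * ‖x‖ := (gseq n).le_opNorm x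
        _ ≤ C * ‖x‖ := mul_le_mul_of_nonneg_right (hCA _ (hmemA n)) (norm_nonneg x)
    set Tlin : X →ₗ[ℝ] ellInfty :=
      { toFun := fun x => ⟨fun n => gseq n x, hmemlp x⟩
        map_add' := by
          intro x y
          apply lp.ext
          funext n
          exact map_add (gseq n) x y
        map_smul' := by
          intro cc x
          apply lp.ext
          funext n
          exact map_smul (gseq n) cc x } with hTlin
    have hTbound : ∀ x, ‖Tlin x‖ ≤ C * ‖x‖ := by
      intro x
      rw [lp.norm_eq_ciSup]
      refine ciSup_le fun n => ?_
      calc ‖gseq n x‖ ≤ ‖gseq n‖ * ‖x‖ := (gseq n).le_opNorm x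
        _ ≤ C * ‖x‖ := mul_le_mul_of_nonneg_right (hCA _ (hmemA n)) (norm_nonneg x)
    set T : X →L[ℝ] ellInfty := Tlin.mkContinuous C hTbound with hT
    have hTapp : ∀ (x : X) (n : ℕ), (T x) n = gseq n x := fun x n => rfl
    have hDPcc : IsDPcc T := by
      intro x hwn hdp
      have hsup := hA x hwn hdp
      refine squeeze_zero (fun k => norm_nonneg _) (fun k => ?_) hsup
      rw [lp.norm_eq_ciSup]
      refine ciSup_le fun n => ?_
      have hbdd2 : BddAbove (Set.range fun f : A => |(f : X →L[ℝ] ℝ) (x k)|) := by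
        refine ⟨C * ‖x k‖, ?_⟩
        rintro - ⟨⟨φ, hφ⟩, rfl⟩
        calc |φ (x k)| ≤ ‖φ‖ * ‖x k‖ := by
              have := φ.le_opNorm (x k); rwa [Real.norm_eq_abs] at this
          _ ≤ C * ‖x k‖ := mul_le_mul_of_nonneg_right (hCA φ hφ) (norm_nonneg _)
      have heq : ‖(T (x k)) n‖ = |gseq n (x k)| := by rw [hTapp, Real.norm_eq_abs]
      rw [heq]
      exact le_ciSup hbdd2 ⟨gseq n, hmemA n⟩
    have hWC : IsCompact (closure ((toWeakSpace ℝ ellInfty) '' (T '' closedBall 0 1))) :=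
      h T hDPcc
    set V : Ultrafilter ℕ := Ultrafilter.of atTop with hV
    have hVle : (V : Filter ℕ) ≤ atTop := Ultrafilter.of_le _
    set y : ℕ → ellInfty := fun m => T (R⁻¹ • xseq m) with hydef
    have hymem : ∀ m, (toWeakSpace ℝ ellInfty) (y m) ∈
        (toWeakSpace ℝ ellInfty) '' (T '' closedBall 0 1) := by
      intro m
      refine ⟨y m, ⟨R⁻¹ • xseq m, ?_, rfl⟩, rfl⟩
      rw [mem_closedBall_zero_iff, norm_smul, Real.norm_eq_abs,
        abs_of_pos (inv_pos.mpr hR0)]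
      calc R⁻¹ * ‖xseq m‖ ≤ R⁻¹ * R :=
            mul_le_mul_of_nonneg_left (hxRn m) (inv_pos.mpr hR0).le
        _ = 1 := inv_mul_cancel₀ hR0.ne'
    obtain ⟨z, hzmem, hzle⟩ := hWC.ultrafilter_le_nhds'
      (V.map fun m => (toWeakSpace ℝ ellInfty) (y m))
      (by rw [Ultrafilter.mem_map]
          exact Filter.Eventually.of_forall fun m => subset_closure (hymem m))
    have hz : Tendsto (fun m => (toWeakSpace ℝ ellInfty) (y m)) ↑V (𝓝 z) := by
      rwa [Ultrafilter.coe_map] at hzle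
    set z' : ellInfty := (toWeakSpace ℝ ellInfty).symm z with hz'def
    have hzy : ∀ ψ : ellInfty →L[ℝ] ℝ, Tendsto (fun m => ψ (y m)) ↑V (𝓝 (ψ z')) := by
      intro ψ
      have hcont : Continuous fun w : WeakSpace ℝ ellInfty =>
          (topDualPairing ℝ ellInfty).flip w ψ := WeakBilin.eval_continuous _ ψ
      exact (hcont.tendsto z).comp hz
    -- coordinate functionals
    set coord : ℕ → (ellInfty →L[ℝ] ℝ) := fun n => LinearMap.mkContinuous
      { toFun := fun f : ellInfty => f n
        map_add' := by
          intro a b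
          show (a + b : ellInfty) n = a n + b n
          rw [lp.coeFn_add]; rfl
        map_smul' := by
          intro a b
          show (a • b : ellInfty) n = a • (b n)
          rw [lp.coeFn_smul]; rfl }
      1 (fun f => by
        rw [one_mul]
        exact lp.norm_apply_le_norm ENNReal.top_ne_zero f n) with hcoord
    have hcoordapp : ∀ n (f : ellInfty), coord n f = f n := fun n f => rfl
    -- ultrafilter limit functional
    have hψex : ∀ f : ellInfty, ∃ L, Tendsto (fun n => f n) ↑V (𝓝 L) ∧ |L| ≤ ‖f‖ := by
      intro f
      apply exists_ultra_lim
      refine Filter.Eventually.of_forall fun n => ?_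
      have := lp.norm_apply_le_norm ENNReal.top_ne_zero f n
      rwa [Real.norm_eq_abs] at this
    choose ψf hψf hψfle using hψex
    have ψadd : ∀ a b : ellInfty, ψf (a + b) = ψf a + ψf b := by
      intro a b
      refine tendsto_nhds_unique (hψf (a + b)) ?_
      have hfun : (fun n : ℕ => (a + b : ellInfty) n) = fun n => a n + b n := by
        funext n; rw [lp.coeFn_add]; rfl
      rw [hfun]
      exact (hψf a).add (hψf b)
    have ψsmul : ∀ (cc : ℝ) (a : ellInfty), ψf (cc • a) = cc * ψf a := by
      intro cc a
      refine tendsto_nhds_unique (hψf (cc • a)) ?_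
      have hfun : (fun n : ℕ => (cc • a : ellInfty) n) = fun n => cc * a n := by
        funext n; rw [lp.coeFn_smul]; rfl
      rw [hfun]
      exact (hψf a).const_mul cc
    set ψW : ellInfty →L[ℝ] ℝ := LinearMap.mkContinuous
      { toFun := ψf, map_add' := ψadd, map_smul' := by intro cc a; simp only [RingHom.id_apply, smul_eq_mul]; exact ψsmul cc a } 1
      (fun f => by rw [one_mul]; simpa [Real.norm_eq_abs] using hψfle f) with hψW
    have hψWapp : ∀ f, ψW f = ψf f := fun f => rfl
    -- numerics
    have hscale : ∀ a b d : ℝ, |a - b| ≤ d → |R⁻¹ * a - R⁻¹ * b| ≤ d := by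
      intro a b d hd
      rw [← mul_sub, abs_mul, abs_of_pos (inv_pos.mpr hR0)]
      calc R⁻¹ * |a - b| ≤ 1 * |a - b| :=
            mul_le_mul_of_nonneg_right hRinv1 (abs_nonneg _)
        _ = |a - b| := one_mul _
        _ ≤ d := hd
    have hyapp : ∀ m n, (y m) n = R⁻¹ * gseq n (xseq m) := by
      intro m n
      show gseq n (R⁻¹ • xseq m) = _
      rw [map_smul, smul_eq_mul]
    have hzn : ∀ n, z' n = R⁻¹ * Φ (gseq n) := by
      intro n
      have h1 := hzy (coord n)
      have h2 : Tendsto (fun m => coord n (y m)) atTop (𝓝 (R⁻¹ * Φ (gseq n))) := by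
        apply tendsto_of_eventually_abs_le
        filter_upwards [eventually_ge_atTop n] with m hm
        rw [hcoordapp, hyapp]
        exact hscale _ _ _ (le_of_lt (hgsx m n hm))
      exact tendsto_nhds_unique h1 (h2.mono_left hVle)
    have hz'tend : Tendsto (fun n => z' n) atTop (𝓝 (R⁻¹ * c)) := by
      apply tendsto_of_eventually_abs_le
      refine Filter.Eventually.of_forall fun n => ?_
      rw [hzn n]
      exact hscale _ _ _ (le_of_lt (hPgs n))
    have hψz' : ψf z' = R⁻¹ * c := tendsto_nhds_unique (hψf z') (hz'tend.mono_left hVle)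
    have hψym : ∀ m, ψf (y m) = R⁻¹ * g (xseq m) := by
      intro m
      refine tendsto_nhds_unique (hψf (y m)) (Filter.Tendsto.mono_left ?_ hVle)
      apply tendsto_of_eventually_abs_le
      filter_upwards [eventually_gt_atTop m] with n hn
      rw [hyapp]
      exact hscale _ _ _ (le_of_lt (hgx2 n m hn))
    have h5 := hzy ψW
    have h5' : Tendsto (fun m => R⁻¹ * g (xseq m)) ↑V (𝓝 (R⁻¹ * c)) := by
      have heq : (fun m => ψW (y m)) = fun m => R⁻¹ * g (xseq m) := funext fun m => hψym m
      have heq2 : ψW z' = R⁻¹ * c := hψz'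
      rw [heq, heq2] at h5
      exact h5
    have h6 : Tendsto (fun m => R⁻¹ * g (xseq m)) ↑V (𝓝 (R⁻¹ * Φ g)) := by
      refine Filter.Tendsto.mono_left ?_ hVle
      apply tendsto_of_eventually_abs_le
      refine Filter.Eventually.of_forall fun m => ?_
      exact hscale _ _ _ (le_of_lt (hgxg m))
    have hfin := tendsto_nhds_unique h5' h6
    exact (mul_left_cancel₀ (inv_ne_zero hR0.ne') hfin).symm
  have htend : Tendsto (fun w : WeakSpace ℝ (X →L[ℝ] ℝ) => w) ↑U (𝓝 (e g)) := by
    refine (WeakBilin.tendsto_iff_forall_eval_tendsto (B := (topDualPairing ℝ (X →L[ℝ] ℝ)).flip)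
      (f := fun w : WeakSpace ℝ (X →L[ℝ] ℝ) => w) (x := e g) hBinj).mpr ?_
    intro Φ
    have h1 : Tendsto (fun w : WeakSpace ℝ (X →L[ℝ] ℝ) => Φ (e.symm w)) ↑U (𝓝 (Φ g)) := by
      have h2 := hmain Φ
      rw [hU'def, Ultrafilter.coe_map] at h2
      exact Filter.tendsto_map'_iff.mp h2
    exact h1
  rwa [Tendsto, Filter.map_id'] at htend
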